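/- Suppose N > 0 and k·N ≥ 1, and suppose there exist a real number β and a continuous function W : [r_i, r_o] → ℝ such that r·Q'(r) = W(r)·(U(r) − β) for all r ∈ [r_i, r_o] and 0 ≤ W(r) ≤ (π/ln η)²/(N² + r_o²) + 1/N² for all r ∈ [r_i, r_o] (the Kelvin–Arnol'd II condition for non-axisymmetric disturbances in an annulus). Then G(r) = 0 for all r ∈ [r_i, r_o]; that is, no nontrivial solution with Im c ≠ 0 exists. -/

import Mathlib

open Real MeasureTheory intervalIntegral Set
set_option maxHeartbeats 2000000

section helpers
variable {a b : ℝ} {H D : ℝ → ℂ}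

lemma hasDerivAt_normSq_comp {H : ℝ → ℂ} {d : ℂ} {x : ℝ} (h : HasDerivAt H d x) :
    HasDerivAt (fun r => Complex.normSq (H r))
      (2 * ((H x).re * d.re + (H x).im * d.im)) x := by
  have hre : HasDerivAt (fun r => (H r).re) d.re x :=
    (Complex.reCLM.hasFDerivAt.comp_hasDerivAt x h)
  have him : HasDerivAt (fun r => (H r).im) d.im x :=
    (Complex.imCLM.hasFDerivAt.comp_hasDerivAt x h)
  have h2 : HasDerivAt (fun r => (H r).re * (H r).re + (H r).im * (H r).im)
      (2 * ((H x).re * d.re + (H x).im * d.im)) x := by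
    exact ((hre.mul hre).add (him.mul him)).congr_deriv (by ring)
  exact h2.congr_of_eventuallyEq
    (Filter.Eventually.of_forall fun r => by simp [Complex.normSq_apply])

lemma integral_pos_of_pos_at {a b r₀ : ℝ} {f : ℝ → ℝ} (hab : a ≤ b)
    (hf : ContinuousOn f (Icc a b)) (h0 : ∀ x ∈ Icc a b, 0 ≤ f x)
    (hr : r₀ ∈ Ioo a b) (hpos : 0 < f r₀) : 0 < ∫ x in a..b, f x := by
  have hca : ContinuousAt f r₀ := hf.continuousAt (Icc_mem_nhds hr.1 hr.2)
  obtain ⟨δ, hδ, hball⟩ := Metric.eventually_nhds_iff.mp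
    (hca.eventually (eventually_gt_nhds (by linarith : f r₀ / 2 < f r₀)))
  set u := max a (r₀ - δ/2) with hu
  set v := min b (r₀ + δ/2) with hv
  have hau : a ≤ u := le_max_left _ _
  have hur : u < r₀ := max_lt (hr.1) (by linarith)
  have hrv : r₀ < v := lt_min (hr.2) (by linarith)
  have hvb : v ≤ b := min_le_left _ _
  have huv : u < v := hur.trans hrv
  have hsub : Icc u v ⊆ Icc a b := Icc_subset_Icc hau hvb
  have hmid : ∀ x ∈ Icc u v, f r₀ / 2 ≤ f x := by
    intro x hx
    refine (hball ?_).le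
    rw [Real.dist_eq, abs_lt]
    constructor
    · have : r₀ - δ/2 ≤ u := le_max_right _ _
      have := this.trans hx.1; linarith
    · have : v ≤ r₀ + δ/2 := min_le_right _ _
      have := hx.2.trans this; linarith
  have hint : IntervalIntegrable f volume a b := by
    exact (hf.mono (by rw [uIcc_of_le hab])).intervalIntegrable
  have h1 : IntervalIntegrable f volume a u :=
    hint.mono_set (by rw [uIcc_of_le hau, uIcc_of_le hab]; exact Icc_subset_Icc le_rfl (hur.le.trans (hrv.le.trans hvb)))
  have h2 : IntervalIntegrable f volume u v :=
    hint.mono_set (by rw [uIcc_of_le huv.le, uIcc_of_le hab]; exact Icc_subset_Icc hau hvb)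
  have h3 : IntervalIntegrable f volume v b :=
    hint.mono_set (by rw [uIcc_of_le hvb, uIcc_of_le hab]; exact Icc_subset_Icc (hau.trans huv.le) le_rfl)
  have e1 : (0:ℝ) ≤ ∫ x in a..u, f x :=
    intervalIntegral.integral_nonneg hau (fun x hx => h0 x (Icc_subset_Icc le_rfl ((hur.le.trans hrv.le).trans hvb) hx))
  have e3 : (0:ℝ) ≤ ∫ x in v..b, f x :=
    intervalIntegral.integral_nonneg hvb (fun x hx => h0 x (Icc_subset_Icc (hau.trans huv.le) le_rfl hx))
  have e2 : f r₀ / 2 * (v - u) ≤ ∫ x in u..v, f x := by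
    have := intervalIntegral.integral_mono_on huv.le (_root_.intervalIntegrable_const (c := f r₀ / 2)) h2 hmid
    rw [intervalIntegral.integral_const] at this
    calc f r₀ / 2 * (v - u) = (v - u) • (f r₀ / 2) := by rw [smul_eq_mul]; ring
    _ ≤ _ := this
  have hsplit : (∫ x in a..u, f x) + (∫ x in u..v, f x) + (∫ x in v..b, f x) = ∫ x in a..b, f x := by
    rw [intervalIntegral.integral_add_adjacent_intervals h1 h2,
      intervalIntegral.integral_add_adjacent_intervals (h1.trans h2) h3]
  have : 0 < f r₀ / 2 * (v - u) := by
    have := sub_pos.mpr huv; positivity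
  linarith [hsplit]

variable {a b : ℝ} {H D : ℝ → ℂ}

lemma norm_le_of_deriv {M : ℝ} (hab : a ≤ b)
    (hHc : ContinuousOn H (Icc a b)) (hDc : ContinuousOn D (Icc a b))
    (hHD : ∀ r ∈ Ioo a b, HasDerivAt H (D r) r) (hHa : H a = 0)
    (hM : ∀ r ∈ Icc a b, ‖D r‖ ≤ M) :
    ∀ r ∈ Icc a b, ‖H r‖ ≤ M * (r - a) := by
  intro r hr
  have har : a ≤ r := hr.1
  have hIcc : Icc a r ⊆ Icc a b := Icc_subset_Icc le_rfl hr.2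
  have hkey : ∫ y in a..r, D y = H r - H a := by
    refine integral_eq_sub_of_hasDerivAt_of_le har (hHc.mono hIcc)
      (fun x hx => hHD x ⟨hx.1, lt_of_lt_of_le hx.2 hr.2⟩) ?_
    exact ((hDc.mono hIcc).mono (by rw [uIcc_of_le har])).intervalIntegrable
  have : ‖∫ y in a..r, D y‖ ≤ M * |r - a| := by
    refine intervalIntegral.norm_integral_le_of_norm_le_const (fun x hx => ?_)
    rw [uIoc_of_le har] at hx
    exact hM x ⟨hx.1.le, hx.2.trans hr.2⟩
  rw [hkey, hHa, sub_zero] at this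
  rwa [abs_of_nonneg (by linarith)] at this

lemma norm_le_of_deriv' {M : ℝ} (hab : a ≤ b)
    (hHc : ContinuousOn H (Icc a b)) (hDc : ContinuousOn D (Icc a b))
    (hHD : ∀ r ∈ Ioo a b, HasDerivAt H (D r) r) (hHb : H b = 0)
    (hM : ∀ r ∈ Icc a b, ‖D r‖ ≤ M) :
    ∀ r ∈ Icc a b, ‖H r‖ ≤ M * (b - r) := by
  intro r hr
  have hrb : r ≤ b := hr.2
  have hIcc : Icc r b ⊆ Icc a b := Icc_subset_Icc hr.1 le_rfl
  have hkey : ∫ y in r..b, D y = H b - H r := by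
    refine integral_eq_sub_of_hasDerivAt_of_le hrb (hHc.mono hIcc)
      (fun x hx => hHD x ⟨lt_of_le_of_lt hr.1 hx.1, hx.2⟩) ?_
    exact ((hDc.mono hIcc).mono (by rw [uIcc_of_le hrb])).intervalIntegrable
  have : ‖∫ y in r..b, D y‖ ≤ M * |b - r| := by
    refine intervalIntegral.norm_integral_le_of_norm_le_const (fun x hx => ?_)
    rw [uIoc_of_le hrb] at hx
    exact hM x ⟨hr.1.trans hx.1.le, hx.2⟩
  rw [hkey, hHb, zero_sub, norm_neg] at this
  rwa [abs_of_nonneg (by linarith)] at this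


lemma quad_nonneg {x s co ω : ℝ} (Hx Dx : ℂ) (hx : 0 < x) (hs : 0 < s)
    (hpyth : s^2 + co^2 = 1) :
    0 ≤ x * Complex.normSq Dx - ω^2 * (Complex.normSq Hx / x)
      - (-(ω^2)/(x * s^2) * Complex.normSq Hx
          + ω * co / s * (2*(Hx.re*Dx.re + Hx.im*Dx.im))) := by
  set ur := Hx.re; set ui := Hx.im; set dr := Dx.re; set di := Dx.im
  rw [Complex.normSq_apply, Complex.normSq_apply]
  have hkey : x * (dr*dr+di*di) - ω^2 * ((ur*ur+ui*ui) / x)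
      - (-(ω^2)/(x * s^2) * (ur*ur + ui*ui) + ω * co / s * (2*(ur*dr+ui*di)))
      = ((x*s*dr - ω*co*ur)^2 + (x*s*di - ω*co*ui)^2) / (x*s^2) := by
    field_simp
    linear_combination (-(ω^2*(ur^2+ui^2))) * hpyth
  rw [hkey]
  positivity

lemma wirtinger_log (ha : 0 < a) (hab : a < b)
    (hHc : ContinuousOn H (Icc a b)) (hDc : ContinuousOn D (Icc a b))
    (hHD : ∀ r ∈ Ioo a b, HasDerivAt H (D r) r)
    (hHa : H a = 0) (hHb : H b = 0) :
    (π / Real.log (b / a)) ^ 2 * ∫ r in a..b, Complex.normSq (H r) / r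
      ≤ ∫ r in a..b, r * Complex.normSq (D r) := by
  have hb : 0 < b := ha.trans hab
  have hL : 0 < Real.log (b / a) := Real.log_pos ((one_lt_div ha).mpr hab)
  set ω : ℝ := π / Real.log (b / a) with hωdef
  have hω : 0 < ω := div_pos pi_pos hL
  set θ : ℝ → ℝ := fun r => ω * Real.log (r / a) with hθdef
  have hθa : θ a = 0 := by simp [hθdef, div_self ha.ne']
  have hθb : θ b = π := by
    simp only [hθdef, hωdef]
    field_simp
  -- θ strictly increasing facts
  have hθpos : ∀ r, a < r → 0 < θ r := fun r hr =>
    mul_pos hω (Real.log_pos ((one_lt_div ha).mpr hr))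
  have hθltpi : ∀ r, 0 < r → r < b → θ r < π := by
    intro r h0 hrb
    have : Real.log (r / a) < Real.log (b / a) :=
      Real.log_lt_log (div_pos h0 ha) (by exact div_lt_div_of_pos_right hrb ha)
    calc ω * Real.log (r / a) < ω * Real.log (b / a) := by
          exact (mul_lt_mul_iff_right₀ hω).mpr this
    _ = π := by rw [hωdef]; field_simp
  have hsin : ∀ r ∈ Ioo a b, 0 < Real.sin (θ r) := fun r hr =>
    Real.sin_pos_of_pos_of_lt_pi (hθpos r hr.1) (hθltpi r (ha.trans hr.1) hr.2)
  set φ : ℝ → ℝ := fun r => ω * Real.cos (θ r) / Real.sin (θ r) with hφdef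
  set n : ℝ → ℝ := fun r => Complex.normSq (H r) with hndef
  set ψ : ℝ → ℝ := fun r => φ r * n r with hψdef
  have hna : n a = 0 := by simp [hndef, hHa]
  have hnb : n b = 0 := by simp [hndef, hHb]
  have hnc : ContinuousOn n (Icc a b) := Complex.continuous_normSq.comp_continuousOn hHc
  have hn0 : ∀ r, 0 ≤ n r := fun r => Complex.normSq_nonneg _
  -- bound on D
  obtain ⟨M, hM⟩ := isCompact_Icc.exists_bound_of_continuousOn hDc
  have hM0 : 0 ≤ M := le_trans (norm_nonneg _) (hM a ⟨le_rfl, hab.le⟩)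
  have hHle : ∀ r ∈ Icc a b, ‖H r‖ ≤ M * (r - a) :=
    norm_le_of_deriv hab.le hHc hDc hHD hHa hM
  have hHle' : ∀ r ∈ Icc a b, ‖H r‖ ≤ M * (b - r) :=
    norm_le_of_deriv' hab.le hHc hDc hHD hHb hM
  have hnle : ∀ r ∈ Icc a b, n r ≤ M ^ 2 * (r - a) ^ 2 := by
    intro r hr
    have h1 := hHle r hr
    have h2 : n r = ‖H r‖ ^ 2 := (Complex.sq_norm (H r)).symm
    rw [h2]
    calc ‖H r‖ ^ 2 ≤ (M * (r - a)) ^ 2 := pow_le_pow_left₀ (norm_nonneg _) h1 2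
    _ = M ^ 2 * (r - a) ^ 2 := by ring
  have hnle' : ∀ r ∈ Icc a b, n r ≤ M ^ 2 * (b - r) ^ 2 := by
    intro r hr
    have h1 := hHle' r hr
    have h2 : n r = ‖H r‖ ^ 2 := (Complex.sq_norm (H r)).symm
    rw [h2]
    calc ‖H r‖ ^ 2 ≤ (M * (b - r)) ^ 2 := pow_le_pow_left₀ (norm_nonneg _) h1 2
    _ = M ^ 2 * (b - r) ^ 2 := by ring
  -- continuity of θ
  have hθca : ∀ x : ℝ, 0 < x → ContinuousAt θ x := by
    intro x hx
    have h1 : ContinuousAt (fun r : ℝ => r / a) x := continuousAt_id.div_const a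
    have h2 : ContinuousAt Real.log (x / a) := Real.continuousAt_log (by positivity)
    have h3 : ContinuousAt (fun r : ℝ => Real.log (r / a)) x :=
      ContinuousAt.comp (g := Real.log) (f := fun r : ℝ => r / a) h2 h1
    exact continuousAt_const.mul h3
  -- interior continuity of ψ
  have hψca : ∀ x ∈ Ioo a b, ContinuousAt ψ x := by
    intro x hx
    have hx0 : 0 < x := ha.trans hx.1
    have hs := (hsin x hx).ne'
    have hnca : ContinuousAt n x :=
      Complex.continuous_normSq.continuousAt.comp (hHc.continuousAt (Icc_mem_nhds hx.1 hx.2))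
    have hφca : ContinuousAt φ x :=
      (continuousAt_const.mul (Real.continuous_cos.continuousAt.comp (hθca x hx0))).div
        (Real.continuous_sin.continuousAt.comp (hθca x hx0)) hs
    exact hφca.mul hnca
  have hψa0 : ψ a = 0 := by simp [hψdef, hna]
  have hψb0 : ψ b = 0 := by simp [hψdef, hnb]
  -- continuity at a
  have hψa : ContinuousWithinAt ψ (Icc a b) a := by
    rw [ContinuousWithinAt, hψa0]
    apply squeeze_zero_norm' (a := fun r => b * M^2 * (r - a))
    · have hexp : (1:ℝ) < Real.exp (π/(2*ω)) := Real.one_lt_exp_iff.mpr (by positivity)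
      have hmem : Iio (a * Real.exp (π/(2*ω))) ∈ nhds a := Iio_mem_nhds (by nlinarith)
      filter_upwards [eventually_mem_nhdsWithin, nhdsWithin_le_nhds hmem] with r hr hrlt
      rw [Real.norm_eq_abs]
      rcases eq_or_lt_of_le hr.1 with h | h
      · rw [← h, hψa0, abs_zero]; simp
      rcases eq_or_lt_of_le hr.2 with h2 | h2
      · rw [h2, hψb0, abs_zero]
        exact mul_nonneg (mul_nonneg hb.le (sq_nonneg M)) (by linarith [hr.1])
      have hr0 : 0 < r := ha.trans h
      have hθlt : θ r < π/2 := by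
        have hra : r / a < Real.exp (π/(2*ω)) := by
          rw [div_lt_iff₀ ha]; rw [Set.mem_Iio] at hrlt; linarith [hrlt]
        have hlog2 : Real.log (r/a) < π/(2*ω) := by
          calc Real.log (r/a) < Real.log (Real.exp (π/(2*ω))) :=
                Real.log_lt_log (by positivity) hra
          _ = π/(2*ω) := Real.log_exp _
        calc θ r = ω * Real.log (r / a) := rfl
        _ < ω * (π/(2*ω)) := (mul_lt_mul_iff_right₀ hω).mpr hlog2
        _ = π/2 := by field_simp
      have hθ0 : 0 < θ r := hθpos r h
      have hcos : 0 < Real.cos (θ r) := Real.cos_pos_of_mem_Ioo ⟨by nlinarith [pi_pos], hθlt⟩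
      have hsinr : 0 < Real.sin (θ r) := hsin r ⟨h, h2⟩
      have htan : θ r < Real.tan (θ r) := lt_tan hθ0 hθlt
      have htaneq : Real.tan (θ r) = Real.sin (θ r) / Real.cos (θ r) := Real.tan_eq_sin_div_cos _
      have hφle : φ r ≤ ω / θ r := by
        show ω * Real.cos (θ r) / Real.sin (θ r) ≤ ω / θ r
        rw [div_le_div_iff₀ hsinr hθ0]
        rw [htaneq, lt_div_iff₀ hcos] at htan
        nlinarith
      have hφ0 : 0 ≤ φ r := by
        show 0 ≤ ω * Real.cos (θ r) / Real.sin (θ r); positivity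
      have hlog : (r - a)/b ≤ Real.log (r/a) := by
        have h1 : Real.log (a/r) ≤ a/r - 1 := Real.log_le_sub_one_of_pos (by positivity)
        have h2' : Real.log (a/r) = - Real.log (r/a) := by
          rw [← Real.log_inv]; congr 1; rw [inv_div]
        have h3 : 1 - a/r ≤ Real.log (r/a) := by linarith
        have h4 : (r-a)/r = 1 - a/r := by field_simp
        have h5 : (r-a)/b ≤ (r-a)/r := by
          exact div_le_div_of_nonneg_left (by linarith) hr0 hr.2
        linarith
      have hθge : ω * ((r-a)/b) ≤ θ r := by
        calc ω * ((r-a)/b) ≤ ω * Real.log (r/a) := mul_le_mul_of_nonneg_left hlog hω.le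
        _ = θ r := rfl
      have hnr := hnle r hr
      have habs : |ψ r| = φ r * n r := abs_of_nonneg (mul_nonneg hφ0 (hn0 r))
      rw [habs]
      have hstep1 : φ r * n r ≤ (ω/θ r) * (M^2*(r-a)^2) :=
        mul_le_mul hφle hnr (hn0 r) (by positivity)
      have hstep2 : (ω/θ r) * (M^2*(r-a)^2) ≤ (b/(r-a)) * (M^2*(r-a)^2) := by
        have hra0 : 0 < r - a := by linarith
        have : ω/θ r ≤ b/(r-a) := by
          rw [div_le_div_iff₀ hθ0 hra0]
          calc ω * (r-a) = b * (ω * ((r-a)/b)) := by field_simp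
          _ ≤ b * θ r := by exact mul_le_mul_of_nonneg_left hθge hb.le
        exact mul_le_mul_of_nonneg_right this (by positivity)
      have hstep3 : (b/(r-a)) * (M^2*(r-a)^2) = b * M^2 * (r-a) := by
        have hra0 : (r - a) ≠ 0 := by intro hcon; rw [sub_eq_zero] at hcon; exact h.ne' hcon
        field_simp
      linarith
    · have : Filter.Tendsto (fun r : ℝ => b * M^2 * (r - a)) (nhds a) (nhds (b * M^2 * (a - a))) :=
        (continuous_const.mul (continuous_id.sub continuous_const)).tendsto a
      simpa using this.mono_left nhdsWithin_le_nhds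
  -- continuity at b
  have hψb : ContinuousWithinAt ψ (Icc a b) b := by
    rw [ContinuousWithinAt, hψb0]
    apply squeeze_zero_norm' (a := fun r => b * M^2 * (b - r))
    · have hexp1 : Real.exp (-(π/(2*ω))) < 1 := by
        rw [Real.exp_lt_one_iff]
        have : 0 < π/(2*ω) := by positivity
        linarith
      have hblt : b * Real.exp (-(π/(2*ω))) < b := by
        nlinarith [Real.exp_pos (-(π/(2*ω)))]
      have hmem : Ioi (b * Real.exp (-(π/(2*ω)))) ∈ nhds b := Ioi_mem_nhds hblt
      filter_upwards [eventually_mem_nhdsWithin, nhdsWithin_le_nhds hmem] with r hr hrgt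
      rw [Real.norm_eq_abs]
      rcases eq_or_lt_of_le hr.2 with h | h
      · rw [h, hψb0, abs_zero]; simp
      rcases eq_or_lt_of_le hr.1 with h2 | h2
      · rw [← h2, hψa0, abs_zero]
        exact mul_nonneg (mul_nonneg hb.le (sq_nonneg M)) (by linarith [hr.2])
      have hr0 : 0 < r := ha.trans h2
      have hσeq : π - θ r = ω * Real.log (b / r) := by
        have hπ : ω * Real.log (b / a) = π := hθb
        rw [← hπ]
        have e1 : Real.log (b / a) = Real.log b - Real.log a := Real.log_div hb.ne' ha.ne'
        have e2 : Real.log (r / a) = Real.log r - Real.log a := Real.log_div hr0.ne' ha.ne'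
        have e3 : Real.log (b / r) = Real.log b - Real.log r := Real.log_div hb.ne' hr0.ne'
        show ω * Real.log (b/a) - ω * Real.log (r/a) = ω * Real.log (b/r)
        rw [e1, e2, e3]; ring
      set σ := ω * Real.log (b / r) with hσdef
      have hσpos : 0 < σ := mul_pos hω (Real.log_pos ((one_lt_div hr0).mpr h))
      have hσlt : σ < π/2 := by
        have hbr : b / r < Real.exp (π/(2*ω)) := by
          rw [div_lt_iff₀ hr0]
          rw [Set.mem_Ioi] at hrgt
          calc b = b * Real.exp (-(π/(2*ω))) * Real.exp (π/(2*ω)) := by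
                rw [mul_assoc, ← Real.exp_add]; simp
          _ < r * Real.exp (π/(2*ω)) :=
                mul_lt_mul_of_pos_right hrgt (Real.exp_pos _)
          _ = Real.exp (π/(2*ω)) * r := mul_comm _ _
        have hlog2 : Real.log (b/r) < π/(2*ω) := by
          calc Real.log (b/r) < Real.log (Real.exp (π/(2*ω))) :=
                Real.log_lt_log (by positivity) hbr
          _ = π/(2*ω) := Real.log_exp _
        calc σ = ω * Real.log (b / r) := rfl
        _ < ω * (π/(2*ω)) := (mul_lt_mul_iff_right₀ hω).mpr hlog2
        _ = π/2 := by field_simp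
      have hθeq : θ r = π - σ := by
        have := hσeq; linarith
      have hsinθ : Real.sin (θ r) = Real.sin σ := by rw [hθeq, Real.sin_pi_sub]
      have hcosθ : Real.cos (θ r) = -Real.cos σ := by rw [hθeq, Real.cos_pi_sub]
      have hcosσ : 0 < Real.cos σ := Real.cos_pos_of_mem_Ioo ⟨by nlinarith [pi_pos], hσlt⟩
      have hsinσ : 0 < Real.sin σ := Real.sin_pos_of_pos_of_lt_pi hσpos (by nlinarith [pi_pos])
      have htan : σ < Real.tan σ := lt_tan hσpos hσlt
      have htaneq : Real.tan σ = Real.sin σ / Real.cos σ := Real.tan_eq_sin_div_cos _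
      have hφr : φ r = -(ω * Real.cos σ / Real.sin σ) := by
        show ω * Real.cos (θ r) / Real.sin (θ r) = _
        rw [hsinθ, hcosθ]; ring
      have hX0 : 0 ≤ ω * Real.cos σ / Real.sin σ := by positivity
      have habs : |ψ r| = (ω * Real.cos σ / Real.sin σ) * n r := by
        show |φ r * n r| = _
        rw [hφr, abs_mul, abs_neg, abs_of_nonneg hX0, abs_of_nonneg (hn0 r)]
      have hφle : ω * Real.cos σ / Real.sin σ ≤ ω / σ := by
        rw [div_le_div_iff₀ hsinσ hσpos]
        rw [htaneq, lt_div_iff₀ hcosσ] at htan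
        nlinarith
      have hlog : (b - r)/b ≤ Real.log (b/r) := by
        have h1 : Real.log (r/b) ≤ r/b - 1 := Real.log_le_sub_one_of_pos (by positivity)
        have h2' : Real.log (r/b) = - Real.log (b/r) := by
          rw [← Real.log_inv]; congr 1; rw [inv_div]
        have h4 : (b - r)/b = 1 - r/b := by field_simp
        linarith
      have hσge : ω * ((b-r)/b) ≤ σ := mul_le_mul_of_nonneg_left hlog hω.le
      have hnr := hnle' r hr
      rw [habs]
      have hbr0 : 0 < b - r := by linarith
      have hstep1 : (ω * Real.cos σ / Real.sin σ) * n r ≤ (ω/σ) * (M^2*(b-r)^2) :=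
        mul_le_mul hφle hnr (hn0 r) (by positivity)
      have hstep2 : (ω/σ) * (M^2*(b-r)^2) ≤ (b/(b-r)) * (M^2*(b-r)^2) := by
        have hq : ω/σ ≤ b/(b-r) := by
          rw [div_le_div_iff₀ hσpos hbr0]
          calc ω * (b-r) = b * (ω * ((b-r)/b)) := by field_simp
          _ ≤ b * σ := mul_le_mul_of_nonneg_left hσge hb.le
        exact mul_le_mul_of_nonneg_right hq (by positivity)
      have hstep3 : (b/(b-r)) * (M^2*(b-r)^2) = b * M^2 * (b-r) := by
        field_simp
      linarith
    · have ht : Filter.Tendsto (fun r : ℝ => b * M^2 * (b - r)) (nhds b) (nhds (b * M^2 * (b - b))) :=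
        (continuous_const.mul (continuous_const.sub continuous_id)).tendsto b
      simpa using ht.mono_left nhdsWithin_le_nhds
  have hψc : ContinuousOn ψ (Icc a b) := by
    intro x hx
    rcases eq_or_lt_of_le hx.1 with h | h
    · rw [← h]; exact hψa
    rcases eq_or_lt_of_le hx.2 with h2 | h2
    · rw [h2]; exact hψb
    exact (hψca x ⟨h, h2⟩).continuousWithinAt
  -- the integrand and its primitive
  set g : ℝ → ℝ := fun r => r * Complex.normSq (D r) - ω^2 * (Complex.normSq (H r) / r)
    with hgdef
  have hgc : ContinuousOn g (Icc a b) := by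
    apply ContinuousOn.sub
    · exact continuousOn_id.mul (Complex.continuous_normSq.comp_continuousOn hDc)
    · exact continuousOn_const.mul
        ((Complex.continuous_normSq.comp_continuousOn hHc).div continuousOn_id
          (fun x hx => (ha.trans_le hx.1).ne'))
  have hgint : IntervalIntegrable g volume a b :=
    (hgc.mono (by rw [uIcc_of_le hab.le])).intervalIntegrable
  set Φ : ℝ → ℝ := fun x => ∫ r in a..x, g r with hΦdef
  have hΦc : ContinuousOn Φ (Icc a b) := by
    have h1 : IntegrableOn g (uIcc a b) volume := by
      rw [uIcc_of_le hab.le]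
      exact hgc.integrableOn_Icc
    have := intervalIntegral.continuousOn_primitive_interval h1
    rwa [uIcc_of_le hab.le] at this
  have hΦd : ∀ x ∈ Ioo a b, HasDerivAt Φ (g x) x := by
    intro x hx
    have hmono : IntervalIntegrable g volume a x :=
      hgint.mono_set (by
        rw [uIcc_of_le hx.1.le, uIcc_of_le hab.le]
        exact Icc_subset_Icc le_rfl hx.2.le)
    have hmeas : StronglyMeasurableAtFilter g (nhds x) volume :=
      (hgc.mono Ioo_subset_Icc_self).stronglyMeasurableAtFilter isOpen_Ioo x hx
    exact intervalIntegral.integral_hasDerivAt_right hmono hmeas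
      (hgc.continuousAt (Icc_mem_nhds hx.1 hx.2))
  -- derivative of ψ on the interior
  have hψd : ∀ x ∈ Ioo a b, HasDerivAt ψ
      (-(ω^2)/(x * Real.sin (θ x)^2) * n x
        + φ x * (2*((H x).re*(D x).re+(H x).im*(D x).im))) x := by
    intro x hx
    have hx0 : 0 < x := ha.trans hx.1
    have hs := hsin x hx
    have hθd : HasDerivAt θ (ω / x) x := by
      have h1 : HasDerivAt (fun r : ℝ => Real.log r - Real.log a) (1/x) x := by
        simpa using (Real.hasDerivAt_log hx0.ne').sub_const (Real.log a)
      have h2 : HasDerivAt (fun r : ℝ => Real.log (r/a)) (1/x) x := by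
        apply h1.congr_of_eventuallyEq
        filter_upwards [eventually_gt_nhds hx0] with r hr
        rw [Real.log_div hr.ne' ha.ne']
      have h3 := h2.const_mul ω
      exact h3.congr_deriv (by ring)
    have hcosd : HasDerivAt (fun r => Real.cos (θ r)) (-Real.sin (θ x) * (ω/x)) x := hθd.cos
    have hnum : HasDerivAt (fun r => ω * Real.cos (θ r)) (ω * (-Real.sin (θ x) * (ω/x))) x :=
      hcosd.const_mul ω
    have hsind : HasDerivAt (fun r => Real.sin (θ r)) (Real.cos (θ x) * (ω/x)) x := hθd.sin
    have hφd : HasDerivAt φ (-(ω^2)/(x * Real.sin (θ x)^2)) x := by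
      have hdv := hnum.div hsind hs.ne'
      refine hdv.congr_deriv ?_
      have hpyth := Real.sin_sq_add_cos_sq (θ x)
      symm
      field_simp
      linear_combination hpyth
    have hnd : HasDerivAt n (2*((H x).re*(D x).re+(H x).im*(D x).im)) x :=
      hasDerivAt_normSq_comp (hHD x hx)
    exact hφd.mul hnd
  -- χ is monotone
  set χ : ℝ → ℝ := fun x => Φ x - ψ x with hχdef
  have hχmono : MonotoneOn χ (Icc a b) := by
    apply monotoneOn_of_deriv_nonneg (convex_Icc a b) (hΦc.sub hψc)
    · intro x hx
      rw [interior_Icc] at hx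
      exact ((hΦd x hx).sub (hψd x hx)).differentiableAt.differentiableWithinAt
    · intro x hx
      rw [interior_Icc] at hx
      have hd := (hΦd x hx).sub (hψd x hx)
      rw [hd.deriv]
      have hx0 : 0 < x := ha.trans hx.1
      have hs := hsin x hx
      have hpyth := Real.sin_sq_add_cos_sq (θ x)
      have hq := quad_nonneg (co := Real.cos (θ x)) (ω := ω) (H x) (D x) hx0 hs hpyth
      simp only [hgdef, hndef, hφdef]
      exact hq
  -- conclude
  have h0 : χ a ≤ χ b := hχmono ⟨le_rfl, hab.le⟩ ⟨hab.le, le_rfl⟩ hab.le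
  have hΦa : Φ a = 0 := by
    simp only [hΦdef]; exact intervalIntegral.integral_same
  have hg0 : 0 ≤ ∫ r in a..b, g r := by
    have ha0 : χ a = 0 := by simp only [hχdef, hΦa, hψa0, sub_zero]
    have hb' : χ b = Φ b := by simp only [hχdef, hψb0, sub_zero]
    rw [ha0, hb'] at h0
    simpa [hΦdef] using h0
  have hint1 : IntervalIntegrable (fun r => r * Complex.normSq (D r)) volume a b := by
    apply ContinuousOn.intervalIntegrable
    rw [uIcc_of_le hab.le]
    exact continuousOn_id.mul (Complex.continuous_normSq.comp_continuousOn hDc)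
  have hint2 : IntervalIntegrable (fun r => ω^2 * (Complex.normSq (H r) / r)) volume a b := by
    apply ContinuousOn.intervalIntegrable
    rw [uIcc_of_le hab.le]
    exact continuousOn_const.mul
      ((Complex.continuous_normSq.comp_continuousOn hHc).div continuousOn_id
        (fun x hx => (ha.trans_le hx.1).ne'))
  have hsplit : ∫ r in a..b, g r
      = (∫ r in a..b, r * Complex.normSq (D r)) - ω^2 * ∫ r in a..b, Complex.normSq (H r)/r := by
    rw [hgdef]
    rw [intervalIntegral.integral_sub hint1 hint2]
    congr 1
    exact intervalIntegral.integral_const_mul _ _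
  have : ω^2 * ∫ r in a..b, Complex.normSq (H r)/r ≤ ∫ r in a..b, r * Complex.normSq (D r) := by
    linarith [hg0, hsplit]
  exact this


end helpers

/-- Kelvin–Arnol'd II sufficient condition for stability of axisymmetric base
flows in an annulus, non-axisymmetric case (`N > 0`, `k·N ≥ 1`): if there
exist `β` and a continuous `W` with `r Q'(r) = W(r)(U(r) - β)` and
`0 ≤ W ≤ (π/ln η)²/(N² + ro²) + 1/N²` on `[ri, ro]`, then the Rayleigh-type
equation has no nontrivial solution with `Im c ≠ 0`. -/
theorem stmt_1
    (ri ro : ℝ) (hri : 0 < ri) (hio : ri < ro)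
    (N k : ℝ) (hN : 0 < N) (hk : 0 < k) (hkN : 1 ≤ k * N)
    (c : ℂ) (hc : c.im ≠ 0)
    (U Q : ℝ → ℝ)
    (hU : ContDiffOn ℝ 2 U (Set.Icc ri ro))
    (hQ : ∀ r, Q r = -(r * deriv U r) / (N ^ 2 + r ^ 2))
    (G : ℝ → ℂ)
    (hG : ContDiffOn ℝ 2 G (Set.Icc ri ro))
    (hGi : G ri = 0) (hGo : G ro = 0)
    (heq : ∀ r ∈ Set.Icc ri ro,
      deriv (fun s : ℝ => ((s / (N ^ 2 + s ^ 2) : ℝ) : ℂ) *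
          deriv (fun t : ℝ => (t : ℂ) * G t) s) r
        - (k : ℂ) ^ 2 * G r
        + ((deriv Q r : ℝ) : ℂ) / ((U r : ℂ) - c) * ((r : ℂ) * G r) = 0)
    (β : ℝ) (W : ℝ → ℝ)
    (hWc : ContinuousOn W (Set.Icc ri ro))
    (hWQ : ∀ r ∈ Set.Icc ri ro, r * deriv Q r = W r * (U r - β))
    (hWlo : ∀ r ∈ Set.Icc ri ro, 0 ≤ W r)
    (hWhi : ∀ r ∈ Set.Icc ri ro,
      W r ≤ (Real.pi / Real.log (ri / ro)) ^ 2 / (N ^ 2 + ro ^ 2) + 1 / N ^ 2) :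
    ∀ r ∈ Set.Icc ri ro, G r = 0 := by
  have hro : 0 < ro := hri.trans hio
  set S := Set.Icc ri ro with hSdef
  have hUD : UniqueDiffOn ℝ S := uniqueDiffOn_Icc hio
  have hxpos : ∀ x ∈ S, (0:ℝ) < x := fun x hx => hri.trans_le hx.1
  set H : ℝ → ℂ := fun t : ℝ => (t : ℂ) * G t with hHdef
  have hH2 : ContDiffOn ℝ 2 H S :=
    (Complex.ofRealCLM.contDiff.contDiffOn (s := S)).mul hG
  set D : ℝ → ℂ := derivWithin H S with hDdef
  have hD1 : ContDiffOn ℝ 1 D S := hH2.derivWithin hUD (by norm_num)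
  have hDc : ContinuousOn D S := hD1.continuousOn
  have hHc : ContinuousOn H S := hH2.continuousOn
  have hHD : ∀ x ∈ Set.Ioo ri ro, HasDerivAt H (D x) x := by
    intro x hx
    have hmem : S ∈ nhds x := Icc_mem_nhds hx.1 hx.2
    have hdiff : DifferentiableWithinAt ℝ H S x :=
      (hH2.differentiableOn (by norm_num)) x (Ioo_subset_Icc_self hx)
    have h2 := (hdiff.differentiableAt hmem).hasDerivAt
    have h3 : D x = deriv H x := derivWithin_of_mem_nhds hmem
    rw [h3]; exact h2
  set p : ℝ → ℝ := fun s => s / (N ^ 2 + s ^ 2) with hpdef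
  have hpden : ∀ s : ℝ, N ^ 2 + s ^ 2 ≠ 0 := fun s => by positivity
  have hp : ContDiff ℝ 2 p :=
    contDiff_id.div ((contDiff_const (c := N ^ 2)).add (contDiff_id.pow 2)) hpden
  set PD : ℝ → ℂ := fun s => ((p s : ℝ) : ℂ) * D s with hPDdef
  have hPD1 : ContDiffOn ℝ 1 PD S :=
    (((Complex.ofRealCLM.contDiff.comp hp).of_le (by norm_num)).contDiffOn).mul hD1
  set E : ℝ → ℂ := derivWithin PD S with hEdef
  have hEc : ContinuousOn E S := hPD1.continuousOn_derivWithin hUD le_rfl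
  have hPDd : ∀ x ∈ Set.Ioo ri ro, HasDerivAt PD (E x) x := by
    intro x hx
    have hmem : S ∈ nhds x := Icc_mem_nhds hx.1 hx.2
    have hdiff : DifferentiableWithinAt ℝ PD S x :=
      (hPD1.differentiableOn (by norm_num)) x (Ioo_subset_Icc_self hx)
    have h2 := (hdiff.differentiableAt hmem).hasDerivAt
    have h3 : E x = deriv PD x := derivWithin_of_mem_nhds hmem
    rw [h3]; exact h2
  -- rewrite the equation on the interior
  have heq' : ∀ x ∈ Set.Ioo ri ro,
      E x = (k : ℂ) ^ 2 * G x - ((deriv Q x : ℝ) : ℂ) / ((U x : ℂ) - c) * H x := by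
    intro x hx
    have hx' : x ∈ S := Ioo_subset_Icc_self hx
    have hev : (fun s : ℝ => ((s / (N ^ 2 + s ^ 2) : ℝ) : ℂ) * deriv H s) =ᶠ[nhds x] PD := by
      filter_upwards [Ioo_mem_nhds hx.1 hx.2] with s hs
      rw [(hHD s hs).deriv]
    have hA : deriv (fun s : ℝ => ((s / (N ^ 2 + s ^ 2) : ℝ) : ℂ) * deriv H s) x
        = deriv PD x := hev.deriv_eq
    have hA2 : deriv PD x = E x := (derivWithin_of_mem_nhds (Icc_mem_nhds hx.1 hx.2)).symm
    have h0 := heq x hx'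
    rw [hA, hA2] at h0
    linear_combination h0
  -- real-valued auxiliary functions
  set n : ℝ → ℝ := fun x => Complex.normSq (H x) with hndef
  set m : ℝ → ℝ := fun x => (U x - c.re) ^ 2 + c.im ^ 2 with hmdef
  set w : ℝ → ℝ := fun x => W x * (U x - β) / x with hwdef
  have him2 : 0 < c.im ^ 2 :=
    lt_of_le_of_ne (sq_nonneg _) (Ne.symm (pow_ne_zero 2 hc))
  have hmpos : ∀ x, 0 < m x := fun x => by
    have : (0:ℝ) ≤ (U x - c.re)^2 := sq_nonneg _
    simp only [hmdef]; nlinarith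
  have hUc : ContinuousOn U S := hU.continuousOn
  have hGc : ContinuousOn G S := hG.continuousOn
  have hUne : ∀ x ∈ S, ((U x : ℂ) - c) ≠ 0 := by
    intro x hx h0
    apply hc
    have := congrArg Complex.im h0
    simpa using this.symm
  have hnc : ContinuousOn n S := Complex.continuous_normSq.comp_continuousOn hHc
  have hn0 : ∀ x, 0 ≤ n x := fun x => Complex.normSq_nonneg _
  have hwc : ContinuousOn w S :=
    ((hWc.mul (hUc.sub continuousOn_const)).div continuousOn_id
      (fun x hx => (hxpos x hx).ne'))
  have hwq : ∀ x ∈ S, (deriv Q x : ℝ) = w x := by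
    intro x hx
    have h1 := hWQ x hx
    have hx0 := (hxpos x hx).ne'
    simp only [hwdef]
    field_simp
    linarith [h1]
  -- the energy identity
  set F : ℝ → ℂ := fun x => PD x * (starRingEnd ℂ) (H x) with hFdef
  set g2 : ℝ → ℂ := fun x =>
    (k : ℂ) ^ 2 * G x * (starRingEnd ℂ) (H x)
      - ((w x : ℝ) : ℂ) / ((U x : ℂ) - c) * ((n x : ℝ) : ℂ)
      + PD x * (starRingEnd ℂ) (D x) with hg2def
  have hg2c : ContinuousOn g2 S := by
    apply ContinuousOn.add
    · apply ContinuousOn.sub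
      · exact (continuousOn_const.mul hGc).mul
          (Complex.continuous_conj.comp_continuousOn hHc)
      · exact ((Complex.continuous_ofReal.comp_continuousOn hwc).div
            ((Complex.continuous_ofReal.comp_continuousOn hUc).sub continuousOn_const)
            hUne).mul (Complex.continuous_ofReal.comp_continuousOn hnc)
    · exact ((Complex.continuous_ofReal.comp_continuousOn (hp.continuous.comp_continuousOn
        continuousOn_id)).mul hDc).mul (Complex.continuous_conj.comp_continuousOn hDc)
  have hFd : ∀ x ∈ Set.Ioo ri ro, HasDerivAt F (g2 x) x := by
    intro x hx
    have hx' : x ∈ S := Ioo_subset_Icc_self hx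
    have hconj : HasDerivAt (fun y => (starRingEnd ℂ) (H y)) ((starRingEnd ℂ) (D x)) x := by
      have := ((Complex.conjCLE : ℂ ≃L[ℝ] ℂ).toContinuousLinearMap.hasFDerivAt
        (x := H x)).comp_hasDerivAt x (hHD x hx)
      simp at this
      exact this
    have hprod := (hPDd x hx).mul hconj
    have hEx := heq' x hx
    have hfw : ((deriv Q x : ℝ) : ℂ) = ((w x : ℝ) : ℂ) := by
      rw [hwq x hx']
    have hHH : H x * (starRingEnd ℂ) (H x) = ((n x : ℝ) : ℂ) := Complex.mul_conj _
    have hval : E x * (starRingEnd ℂ) (H x) + PD x * (starRingEnd ℂ) (D x) = g2 x := by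
      rw [hEx, hfw]
      simp only [hg2def]
      linear_combination (-(((w x : ℝ) : ℂ) / ((U x : ℂ) - c))) * hHH
    rw [← hval]
    exact hprod
  have hFc : ContinuousOn F S := by
    exact ((Complex.continuous_ofReal.comp_continuousOn (hp.continuous.comp_continuousOn
      continuousOn_id)).mul hDc).mul (Complex.continuous_conj.comp_continuousOn hHc)
  have hg2int : IntervalIntegrable g2 volume ri ro :=
    (hg2c.mono (by rw [uIcc_of_le hio.le])).intervalIntegrable
  have hHri : H ri = 0 := by simp [hHdef, hGi]
  have hHro : H ro = 0 := by simp [hHdef, hGo]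
  have hFint : ∫ x in ri..ro, g2 x = 0 := by
    rw [integral_eq_sub_of_hasDerivAt_of_le hio.le hFc hFd hg2int]
    simp [hFdef, hHri, hHro]
  -- real decomposition functions
  set A : ℝ → ℝ := fun x => p x * Complex.normSq (D x) with hAdef
  set B : ℝ → ℝ := fun x => n x / x with hBdef
  set T : ℝ → ℝ := fun x => w x * n x * (U x - c.re) / m x with hTdef
  set Y : ℝ → ℝ := fun x => w x * n x / m x with hYdef
  have hg2dec : ∀ x ∈ S, g2 x
      = ((k^2 * B x - T x + A x : ℝ) : ℂ) + ((-(Y x * c.im) : ℝ) : ℂ) * Complex.I := by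
    intro x hx
    have hx0 : (0:ℝ) < x := hxpos x hx
    have hne := hUne x hx
    have hm0 : m x ≠ 0 := (hmpos x).ne'
    have hGH : G x * (starRingEnd ℂ) (H x) = ((B x : ℝ) : ℂ) := by
      have hconjH : (starRingEnd ℂ) (H x) = (x:ℂ) * (starRingEnd ℂ) (G x) := by
        simp [hHdef, map_mul, Complex.conj_ofReal]
      rw [hconjH]
      have hre : G x * ((x:ℂ) * (starRingEnd ℂ) (G x))
          = (x:ℂ) * (G x * (starRingEnd ℂ) (G x)) := by ring
      rw [hre, Complex.mul_conj]
      have hBx : B x = x * Complex.normSq (G x) := by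
        simp only [hBdef, hndef, hHdef]
        rw [Complex.normSq_mul, Complex.normSq_ofReal]
        field_simp
      rw [hBx]
      push_cast
      ring
    have hDD : PD x * (starRingEnd ℂ) (D x) = ((A x:ℝ):ℂ) := by
      simp only [hPDdef, hAdef]
      rw [mul_assoc, Complex.mul_conj]
      push_cast
      ring
    have hdiv : ((w x : ℝ):ℂ)/((U x:ℂ) - c) * ((n x:ℝ):ℂ)
        = ((T x:ℝ):ℂ) + ((Y x * c.im:ℝ):ℂ) * Complex.I := by
      rw [div_mul_eq_mul_div, div_eq_iff hne]
      have hmx : (U x - c.re)^2 + c.im^2 = m x := rfl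
      apply Complex.ext
      · simp only [Complex.mul_re, Complex.add_re, Complex.add_im, Complex.mul_im,
          Complex.ofReal_re, Complex.ofReal_im, Complex.I_re, Complex.I_im,
          Complex.sub_re, Complex.sub_im, hTdef, hYdef]
        field_simp
        ring
      · simp only [Complex.mul_re, Complex.add_re, Complex.add_im, Complex.mul_im,
          Complex.ofReal_re, Complex.ofReal_im, Complex.I_re, Complex.I_im,
          Complex.sub_re, Complex.sub_im, hTdef, hYdef]
        field_simp
        ring
    simp only [hg2def]
    rw [hdiv, hDD]
    have hk2 : (k:ℂ)^2 * G x * (starRingEnd ℂ) (H x) = (k:ℂ)^2 * ((B x:ℝ):ℂ) := by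
      rw [mul_assoc, hGH]
    rw [hk2]
    push_cast
    ring
  -- continuity and integrability
  have hmc : ContinuousOn m S := by
    simp only [hmdef]
    exact (((hUc.sub continuousOn_const).pow 2).add continuousOn_const)
  have hcontA : ContinuousOn A S :=
    (hp.continuous.comp_continuousOn continuousOn_id).mul
      (Complex.continuous_normSq.comp_continuousOn hDc)
  have hcontB : ContinuousOn B S :=
    hnc.div continuousOn_id (fun x hx => (hxpos x hx).ne')
  have hcontT : ContinuousOn T S :=
    ((hwc.mul hnc).mul (hUc.sub continuousOn_const)).div hmc (fun x _ => (hmpos x).ne')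
  have hcontY : ContinuousOn Y S :=
    (hwc.mul hnc).div hmc (fun x _ => (hmpos x).ne')
  have hcontWn : ContinuousOn (fun x => W x * n x / x) S :=
    (hWc.mul hnc).div continuousOn_id (fun x hx => (hxpos x hx).ne')
  have hcontxD : ContinuousOn (fun x => x * Complex.normSq (D x)) S :=
    continuousOn_id.mul (Complex.continuous_normSq.comp_continuousOn hDc)
  have mkint : ∀ {f : ℝ → ℝ}, ContinuousOn f S → IntervalIntegrable f volume ri ro := by
    intro f hf
    exact (hf.mono (by rw [uIcc_of_le hio.le])).intervalIntegrable
  have hintA := mkint hcontA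
  have hintB := mkint hcontB
  have hintT := mkint hcontT
  have hintY := mkint hcontY
  have hintWn := mkint hcontWn
  have hintxD := mkint hcontxD
  -- split the complex integral
  have hintC1 : IntervalIntegrable (fun x => ((k^2 * B x - T x + A x : ℝ) : ℂ)) volume ri ro := by
    apply ContinuousOn.intervalIntegrable
    rw [uIcc_of_le hio.le]
    exact Complex.continuous_ofReal.comp_continuousOn
      (((continuousOn_const.mul hcontB).sub hcontT).add hcontA)
  have hintC2 : IntervalIntegrable (fun x => ((-(Y x * c.im) : ℝ) : ℂ) * Complex.I) volume ri ro := by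
    apply ContinuousOn.intervalIntegrable
    rw [uIcc_of_le hio.le]
    exact (Complex.continuous_ofReal.comp_continuousOn
      ((hcontY.mul continuousOn_const).neg)).mul continuousOn_const
  have hdecint : (((∫ x in ri..ro, (k^2 * B x - T x + A x) : ℝ)) : ℂ)
      + ((∫ x in ri..ro, -(Y x * c.im) : ℝ) : ℂ) * Complex.I = 0 := by
    rw [← hFint]
    rw [intervalIntegral.integral_congr (g := fun x =>
      ((k^2 * B x - T x + A x : ℝ) : ℂ) + ((-(Y x * c.im) : ℝ) : ℂ) * Complex.I)
      (fun x hx => hg2dec x (by rwa [uIcc_of_le hio.le] at hx))]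
    rw [intervalIntegral.integral_add hintC1 hintC2]
    congr 1
    · rw [← intervalIntegral.integral_ofReal]
    · rw [intervalIntegral.integral_mul_const, ← intervalIntegral.integral_ofReal]
  have hgR0 : (∫ x in ri..ro, (k^2 * B x - T x + A x)) = 0 := by
    have := congrArg Complex.re hdecint
    simpa using this
  have hgI0 : (∫ x in ri..ro, -(Y x * c.im)) = 0 := by
    have := congrArg Complex.im hdecint
    simpa using this
  have hI0 : (∫ x in ri..ro, Y x) = 0 := by
    have hrw : (fun x => -(Y x * c.im)) = fun x => (-c.im) * Y x := by
      funext x; ring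
    rw [hrw, intervalIntegral.integral_const_mul] at hgI0
    rcases mul_eq_zero.mp hgI0 with h | h
    · exact absurd (neg_eq_zero.mp h) hc
    · exact h
  have hsum : k^2 * (∫ x in ri..ro, B x) - (∫ x in ri..ro, T x) + (∫ x in ri..ro, A x) = 0 := by
    have h1 : (∫ x in ri..ro, (k^2 * B x - T x + A x))
        = (∫ x in ri..ro, (k^2 * B x - T x)) + ∫ x in ri..ro, A x := by
      exact intervalIntegral.integral_add ((hintB.const_mul _).sub hintT) hintA
    have h2 : (∫ x in ri..ro, (k^2 * B x - T x))
        = (∫ x in ri..ro, k^2 * B x) - ∫ x in ri..ro, T x :=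
      intervalIntegral.integral_sub (hintB.const_mul _) hintT
    have h3 : (∫ x in ri..ro, k^2 * B x) = k^2 * ∫ x in ri..ro, B x :=
      intervalIntegral.integral_const_mul _ _
    rw [h1, h2, h3] at hgR0
    linarith
  -- bound on m, and κ
  obtain ⟨M₀, hM₀⟩ := isCompact_Icc.exists_bound_of_continuousOn hmc
  have hM₀m : ∀ x ∈ S, m x ≤ M₀ := by
    intro x hx
    have := hM₀ x hx
    rw [Real.norm_eq_abs] at this
    exact (le_abs_self _).trans this
  have hM₀pos : 0 < M₀ := lt_of_lt_of_le (hmpos ri) (hM₀m ri ⟨le_rfl, hio.le⟩)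
  set κ : ℝ := 1 - c.im^2 / M₀ with hκdef
  have hκlt : κ < 1 := by
    have : 0 < c.im^2 / M₀ := div_pos him2 hM₀pos
    simp only [hκdef]; linarith
  have hκ0 : 0 ≤ κ := by
    have h1 : c.im^2 ≤ m ri := by
      simp only [hmdef]; nlinarith [sq_nonneg (U ri - c.re)]
    have h2 : c.im^2 / M₀ ≤ 1 := by
      rw [div_le_one hM₀pos]
      exact h1.trans (hM₀m ri ⟨le_rfl, hio.le⟩)
    simp only [hκdef]; linarith
  -- pointwise bound
  have hpoint : ∀ x ∈ S, T x + (β - c.re) * Y x ≤ κ * (W x * n x / x) := by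
    intro x hx
    have hx0 := hxpos x hx
    have hm0 := hmpos x
    have hW0 := hWlo x hx
    have heq1 : T x + (β - c.re) * Y x
        = (W x * n x / x) * (((U x - c.re)^2 - (β - c.re)^2) / m x) := by
      simp only [hTdef, hYdef, hwdef]
      field_simp
      ring
    rw [heq1]
    have h3 : (U x - c.re)^2 / m x ≤ κ := by
      have he : (U x - c.re)^2 = m x - c.im^2 := by
        simp only [hmdef]; ring
      rw [he, sub_div, div_self hm0.ne']
      have hd : c.im^2 / M₀ ≤ c.im^2 / m x :=
        div_le_div_of_nonneg_left him2.le (hmpos x) (hM₀m x hx)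
      simp only [hκdef]; linarith
    have h4 : ((U x - c.re)^2 - (β - c.re)^2)/m x ≤ (U x - c.re)^2/m x := by
      have hnum : (U x - c.re)^2 - (β - c.re)^2 ≤ (U x - c.re)^2 :=
        sub_le_self _ (sq_nonneg _)
      exact div_le_div_of_nonneg_right hnum hm0.le
    have h5 : ((U x - c.re)^2 - (β - c.re)^2)/m x ≤ κ := h4.trans h3
    calc (W x * n x / x) * (((U x - c.re)^2 - (β - c.re)^2) / m x)
        ≤ (W x * n x / x) * κ :=
          mul_le_mul_of_nonneg_left h5
            (div_nonneg (mul_nonneg hW0 (hn0 x)) hx0.le)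
    _ = κ * (W x * n x / x) := mul_comm _ _
  -- integrate the pointwise bound
  have hTineq : (∫ x in ri..ro, T x) ≤ κ * ∫ x in ri..ro, W x * n x / x := by
    have h1 : (∫ x in ri..ro, (T x + (β - c.re) * Y x))
        ≤ ∫ x in ri..ro, κ * (W x * n x / x) := by
      exact intervalIntegral.integral_mono_on hio.le
        (hintT.add (hintY.const_mul _)) (hintWn.const_mul _) hpoint
    rw [intervalIntegral.integral_add hintT (hintY.const_mul _),
      intervalIntegral.integral_const_mul, intervalIntegral.integral_const_mul,
      hI0, mul_zero, add_zero] at h1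
    exact h1
  -- Wn/x ≤ Cw * B pointwise
  set Cw : ℝ := (π / Real.log (ri/ro))^2/(N^2+ro^2) + 1/N^2 with hCwdef
  have hWnB : ∀ x ∈ S, W x * n x / x ≤ Cw * B x := by
    intro x hx
    have hx0 := hxpos x hx
    have h1 := hWhi x hx
    have h2 : W x * n x / x = W x * B x := by
      simp only [hBdef]; rw [mul_div_assoc]
    rw [h2]
    have hB0 : 0 ≤ B x := div_nonneg (hn0 x) hx0.le
    exact mul_le_mul_of_nonneg_right h1 hB0
  have hWnint : (∫ x in ri..ro, W x * n x / x) ≤ Cw * ∫ x in ri..ro, B x := by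
    have := intervalIntegral.integral_mono_on hio.le hintWn (hintB.const_mul _) hWnB
    rwa [intervalIntegral.integral_const_mul] at this
  have hWn0 : 0 ≤ ∫ x in ri..ro, W x * n x / x := by
    apply intervalIntegral.integral_nonneg hio.le
    intro x hx
    exact div_nonneg (mul_nonneg (hWlo x hx) (hn0 x)) (hxpos x hx).le
  have hB0int : 0 ≤ ∫ x in ri..ro, B x := by
    apply intervalIntegral.integral_nonneg hio.le
    intro x hx
    exact div_nonneg (hn0 x) (hxpos x hx).le
  have hA0int : 0 ≤ ∫ x in ri..ro, A x := by
    apply intervalIntegral.integral_nonneg hio.le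
    intro x hx
    have hx0 := (hxpos x hx).le
    have h1 : 0 ≤ p x := by
      simp only [hpdef]; positivity
    exact mul_nonneg h1 (Complex.normSq_nonneg _)
  -- Wirtinger inequality
  have hwirt : (π / Real.log (ro / ri)) ^ 2 * ∫ x in ri..ro, Complex.normSq (H x) / x
      ≤ ∫ x in ri..ro, x * Complex.normSq (D x) :=
    wirtinger_log hri hio hHc hDc hHD hHri hHro
  have hlogeq : (π / Real.log (ri/ro))^2 = (π / Real.log (ro/ri))^2 := by
    have h1 : Real.log (ri/ro) = - Real.log (ro/ri) := by
      rw [← Real.log_inv]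
      congr 1
      rw [inv_div]
    rw [h1, div_neg]
    ring
  have hxDA : (∫ x in ri..ro, x * Complex.normSq (D x))
      ≤ (N^2+ro^2) * ∫ x in ri..ro, A x := by
    have hpw : ∀ x ∈ S, x * Complex.normSq (D x) ≤ (N^2+ro^2) * A x := by
      intro x hx
      have hx0 := hxpos x hx
      have hDq := Complex.normSq_nonneg (D x)
      have hple : x ≤ (N^2+ro^2) * p x := by
        simp only [hpdef]
        rw [← mul_div_assoc, le_div_iff₀ (by positivity : (0:ℝ) < N^2 + x^2)]
        have hxro : x ≤ ro := hx.2
        nlinarith [mul_nonneg (mul_nonneg hx0.le (sub_nonneg.mpr hxro))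
          (by linarith : (0:ℝ) ≤ ro + x)]
      calc x * Complex.normSq (D x) ≤ ((N^2+ro^2) * p x) * Complex.normSq (D x) :=
            mul_le_mul_of_nonneg_right hple hDq
      _ = (N^2+ro^2) * A x := by simp only [hAdef]; ring
    have := intervalIntegral.integral_mono_on hio.le hintxD (hintA.const_mul _) hpw
    rwa [intervalIntegral.integral_const_mul] at this
  -- combine
  have hNro : (0:ℝ) < N^2 + ro^2 := by positivity
  have hk2 : 1/N^2 ≤ k^2 := by
    have h1 : 1 ≤ (k*N)^2 := by nlinarith
    rw [div_le_iff₀ (by positivity)]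
    nlinarith
  have hCwB : Cw * (∫ x in ri..ro, B x) ≤ (∫ x in ri..ro, A x) + k^2 * ∫ x in ri..ro, B x := by
    have hBn : (∫ x in ri..ro, B x) = ∫ x in ri..ro, Complex.normSq (H x) / x := by
      apply intervalIntegral.integral_congr
      intro x hx
      simp only [hBdef, hndef]
    have h1 : (π / Real.log (ro/ri))^2 * (∫ x in ri..ro, B x)
        ≤ (N^2+ro^2) * ∫ x in ri..ro, A x := by
      rw [hBn]
      exact hwirt.trans hxDA
    have h2 : (π / Real.log (ro/ri))^2/(N^2+ro^2) * (∫ x in ri..ro, B x)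
        ≤ ∫ x in ri..ro, A x := by
      rw [div_mul_eq_mul_div, div_le_iff₀ hNro]
      linarith
    have h3 : 1/N^2 * (∫ x in ri..ro, B x) ≤ k^2 * ∫ x in ri..ro, B x :=
      mul_le_mul_of_nonneg_right hk2 hB0int
    calc Cw * (∫ x in ri..ro, B x)
        = (π / Real.log (ro/ri))^2/(N^2+ro^2) * (∫ x in ri..ro, B x)
          + 1/N^2 * (∫ x in ri..ro, B x) := by
          rw [hCwdef, hlogeq]; ring
    _ ≤ (∫ x in ri..ro, A x) + k^2 * ∫ x in ri..ro, B x := by linarith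
  have hCwpos : 0 < Cw := by
    have h1 : 0 ≤ (π / Real.log (ri/ro))^2/(N^2+ro^2) := by positivity
    have h2 : 0 < 1/N^2 := by positivity
    simp only [hCwdef]; linarith
  have hBzero : (∫ x in ri..ro, B x) = 0 := by
    have hL1 : Cw * (∫ x in ri..ro, B x) ≤ κ * (Cw * ∫ x in ri..ro, B x) := by
      calc Cw * (∫ x in ri..ro, B x) ≤ (∫ x in ri..ro, A x) + k^2 * ∫ x in ri..ro, B x := hCwB
      _ = ∫ x in ri..ro, T x := by linarith [hsum]
      _ ≤ κ * ∫ x in ri..ro, W x * n x / x := hTineq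
      _ ≤ κ * (Cw * ∫ x in ri..ro, B x) := mul_le_mul_of_nonneg_left hWnint hκ0
    have h2 : 0 ≤ Cw * ∫ x in ri..ro, B x := mul_nonneg hCwpos.le hB0int
    have h3 : Cw * (∫ x in ri..ro, B x) ≤ 0 := by
      by_contra hcon
      push_neg at hcon
      have hlt : κ * (Cw * ∫ x in ri..ro, B x) < 1 * (Cw * ∫ x in ri..ro, B x) :=
        mul_lt_mul_of_pos_right hκlt hcon
      rw [one_mul] at hlt
      linarith
    have h4 : (∫ x in ri..ro, B x) ≤ 0 := by
      by_contra hcon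
      push_neg at hcon
      exact absurd (mul_pos hCwpos hcon) (not_lt.mpr h3)
    linarith
  -- conclude
  intro r hr
  by_contra hGne
  have hrIoo : r ∈ Set.Ioo ri ro := by
    rcases eq_or_lt_of_le hr.1 with h | h
    · exact absurd (h ▸ hGi) hGne
    rcases eq_or_lt_of_le hr.2 with h2 | h2
    · exact absurd (h2 ▸ hGo) hGne
    exact ⟨h, h2⟩
  have hr0 : (0:ℝ) < r := hri.trans hrIoo.1
  have hBpos : 0 < B r := by
    have hHne : H r ≠ 0 := by
      simp only [hHdef]
      exact mul_ne_zero (Complex.ofReal_ne_zero.mpr hr0.ne') hGne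
    have hnpos : 0 < n r := Complex.normSq_pos.mpr hHne
    simp only [hBdef]
    positivity
  have hpos := integral_pos_of_pos_at hio.le hcontB
    (fun x hx => div_nonneg (hn0 x) (hxpos x hx).le) hrIoo hBpos
  rw [hBzero] at hpos
  exact lt_irrefl 0 hpos
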